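/- With a, φ, Φ, f, R₀, R₁, c, ε as above, for every r > R₁ one has f'(r)·a(r) ≤ −(ε + c f(r)). -/

import Mathlib

open Filter MeasureTheory Set

private lemma primitive_hasDerivAt {h : ℝ → ℝ} (hc : Continuous h) (x : ℝ) :
    HasDerivAt (fun t => ∫ s in (0:ℝ)..t, h s) (h x) x :=
  intervalIntegral.integral_hasDerivAt_right (hc.intervalIntegrable _ _)
    hc.stronglyMeasurable.stronglyMeasurableAtFilter hc.continuousAt

private lemma primitive_continuous {h : ℝ → ℝ} (hc : Continuous h) :
    Continuous (fun t => ∫ s in (0:ℝ)..t, h s) :=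
  continuous_iff_continuousAt.2 fun x => (primitive_hasDerivAt hc x).continuousAt

set_option maxHeartbeats 2000000 in
theorem f_drift_inequality_beyond_R1 (a φ Φ g f : ℝ → ℝ) (R₀ R₁ c ε : ℝ)
    (ha : Continuous a) (ha0 : 0 < a 0)
    (hlim : limsup (fun r => a r / r) atTop < 0)
    (hφ : ∀ r, φ r = Real.exp (-(1/2) * ∫ s in (0:ℝ)..r, max (a s) 0))
    (hΦ : ∀ r, Φ r = ∫ s in (0:ℝ)..r, φ s)
    (hR₀ : R₀ = sInf {R : ℝ | 0 ≤ R ∧ ∀ r ≥ R, a r ≤ 0})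
    (hR₁ : R₁ = sInf {R : ℝ | R₀ ≤ R ∧ ∀ r ≥ R, R * (R - R₀) * (a r / r) ≤ -4})
    (hg : ∀ r, g r = 1
        - (1/4) * (∫ s in (0:ℝ)..(min r R₁), Φ s / φ s) /
            (∫ s in (0:ℝ)..R₁, Φ s / φ s)
        - (1/4) * (∫ s in (0:ℝ)..(min r R₁), 1 / φ s) /
            (∫ s in (0:ℝ)..R₁, 1 / φ s))
    (hf : ∀ r, f r = ∫ s in (0:ℝ)..r, φ s * g s)
    (hc : c = (2 * ∫ s in (0:ℝ)..R₁, Φ s / φ s)⁻¹)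
    (hε : ε = min (2 * ∫ s in (0:ℝ)..R₁, 1 / φ s)⁻¹ (c * Φ R₁)) :
    ∀ r > R₁, deriv f r * a r ≤ -(ε + c * f r) := by
  intro r hr
  -- continuity basics
  have hmaxc : Continuous (fun s => max (a s) 0) := ha.max continuous_const
  have hφeq : φ = fun x => Real.exp (-(1/2) * ∫ s in (0:ℝ)..x, max (a s) 0) := funext hφ
  have hφc : Continuous φ := by
    rw [hφeq]
    exact Real.continuous_exp.comp (continuous_const.mul (primitive_continuous hmaxc))
  have hφpos : ∀ x, 0 < φ x := fun x => by rw [hφ x]; exact Real.exp_pos _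
  have hφanti : ∀ x y, x ≤ y → φ y ≤ φ x := by
    intro x y hxy
    rw [hφ x, hφ y]
    apply Real.exp_le_exp.2
    have hsplit : (∫ s in (0:ℝ)..x, max (a s) 0) + ∫ s in x..y, max (a s) 0
        = ∫ s in (0:ℝ)..y, max (a s) 0 :=
      intervalIntegral.integral_add_adjacent_intervals
        (hmaxc.intervalIntegrable 0 x) (hmaxc.intervalIntegrable x y)
    have h2 : 0 ≤ ∫ s in x..y, max (a s) 0 :=
      intervalIntegral.integral_nonneg hxy (fun u _ => le_max_right _ _)
    nlinarith
  have hΦeq : Φ = fun x => ∫ s in (0:ℝ)..x, φ s := funext hΦ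
  have hΦc : Continuous Φ := by rw [hΦeq]; exact primitive_continuous hφc
  have hΦnonneg : ∀ x, 0 ≤ x → 0 ≤ Φ x := fun x hx => by
    rw [hΦ x]; exact intervalIntegral.integral_nonneg hx (fun u _ => (hφpos u).le)
  have hΦpos : ∀ x, 0 < x → 0 < Φ x := fun x hx => by
    rw [hΦ x]
    exact intervalIntegral.intervalIntegral_pos_of_pos_on (hφc.intervalIntegrable 0 x)
      (fun s _ => hφpos s) hx
  -- get b < 0 with a r / r ≤ b eventually
  obtain ⟨b, hbmem, hb⟩ : ∃ b ∈ {t : ℝ | ∀ᶠ n in atTop, a n / n ≤ t}, b < 0 := by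
    rw [Filter.limsup_eq] at hlim
    apply exists_lt_of_csInf_lt _ hlim
    by_contra h
    rw [Set.not_nonempty_iff_eq_empty] at h
    rw [h, Real.sInf_empty] at hlim
    linarith
  obtain ⟨M, hM⟩ := eventually_atTop.1 hbmem
  -- S₀ facts
  set S₀ : Set ℝ := {R : ℝ | 0 ≤ R ∧ ∀ r ≥ R, a r ≤ 0} with hS₀
  have hneg_of_div : ∀ x : ℝ, 0 < x → a x / x ≤ b → a x ≤ 0 := by
    intro x hx hax
    by_contra h
    push_neg at h
    have : 0 < a x / x := div_pos h hx
    linarith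
  have hS₀mem : max M 1 ∈ S₀ := by
    constructor
    · have : (0:ℝ) ≤ 1 := zero_le_one
      exact this.trans (le_max_right _ _)
    · intro x hx
      have hx1 : (1:ℝ) ≤ x := (le_max_right M 1).trans hx
      exact hneg_of_div x (by linarith) (hM x ((le_max_left M 1).trans hx))
  have hR₀0 : 0 ≤ R₀ := by
    rw [hR₀]
    exact le_csInf ⟨_, hS₀mem⟩ (fun x hx => hx.1)
  have ha_neg' : ∀ x, R₀ < x → a x ≤ 0 := by
    intro x hx
    obtain ⟨R, hRS, hRx⟩ := exists_lt_of_csInf_lt ⟨_, hS₀mem⟩ (hR₀ ▸ hx)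
    exact hRS.2 x hRx.le
  have ha_neg : ∀ x, R₀ ≤ x → a x ≤ 0 := by
    intro x hx
    rcases eq_or_lt_of_le hx with heq | hlt
    · rw [← heq]
      have ht : Tendsto a (nhdsWithin R₀ (Set.Ioi R₀)) (nhds (a R₀)) :=
        ha.continuousAt.continuousWithinAt.tendsto
      exact le_of_tendsto ht (eventually_nhdsWithin_of_forall (fun y hy => ha_neg' y hy))
    · exact ha_neg' x hlt
  -- φ constant beyond R₀
  have hφconst : ∀ x, R₀ ≤ x → φ x = φ R₀ := by
    intro x hx
    rw [hφ x, hφ R₀]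
    congr 1
    have hsplit : (∫ s in (0:ℝ)..R₀, max (a s) 0) + ∫ s in R₀..x, max (a s) 0
        = ∫ s in (0:ℝ)..x, max (a s) 0 :=
      intervalIntegral.integral_add_adjacent_intervals
        (hmaxc.intervalIntegrable 0 R₀) (hmaxc.intervalIntegrable R₀ x)
    have hzero : ∫ s in R₀..x, max (a s) 0 = 0 := by
      rw [intervalIntegral.integral_congr (g := fun _ => (0:ℝ)) ?_]
      · simp
      · intro s hs
        rw [Set.uIcc_of_le hx] at hs
        exact max_eq_right (ha_neg s hs.1)
    rw [← hsplit, hzero]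
    ring
  -- S₁ facts
  set S₁ : Set ℝ := {R : ℝ | R₀ ≤ R ∧ ∀ r ≥ R, R * (R - R₀) * (a r / r) ≤ -4} with hS₁
  have hbpos : 0 < -b := by linarith
  set Rbig : ℝ := max (max M 1) (R₀ + 1 + 4 / (-b)) with hRbig
  have hRbigS : Rbig ∈ S₁ := by
    have h4b : 0 < 4 / (-b) := by positivity
    constructor
    · have : R₀ ≤ R₀ + 1 + 4 / (-b) := by linarith
      exact this.trans (le_max_right _ _)
    · intro x hx
      have hx1 : (1:ℝ) ≤ x := ((le_max_right M 1).trans (le_max_left _ _)).trans hx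
      have hxM : M ≤ x := ((le_max_left M 1).trans (le_max_left _ _)).trans hx
      have hq : a x / x ≤ b := hM x hxM
      have hRb1 : (1:ℝ) ≤ Rbig := (le_max_right M 1).trans (le_max_left _ _)
      have hRb2 : R₀ + 1 + 4 / (-b) ≤ Rbig := le_max_right _ _
      have hp1 : 4 / (-b) ≤ Rbig * (Rbig - R₀) := by nlinarith
      have hp0 : 0 ≤ Rbig * (Rbig - R₀) := by nlinarith
      have h2 : Rbig * (Rbig - R₀) * (a x / x) ≤ Rbig * (Rbig - R₀) * b :=
        mul_le_mul_of_nonneg_left hq hp0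
      have h3 : Rbig * (Rbig - R₀) * b ≤ (4 / (-b)) * b :=
        mul_le_mul_of_nonpos_right hp1 hb.le
      have h4 : (4 / (-b)) * b = -4 := by
          rw [div_mul_eq_mul_div, div_neg, mul_div_assoc, div_self hb.ne]; ring
      linarith
  have hR₀R₁le : R₀ ≤ R₁ := by
    rw [hR₁]
    exact le_csInf ⟨_, hRbigS⟩ (fun x hx => hx.1)
  have hmono : ∀ s t : ℝ, R₀ ≤ s → s ≤ t → s * (s - R₀) ≤ t * (t - R₀) := by
    intro s t hs hst
    nlinarith
  -- key inequality beyond R₁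
  have hkey : ∀ x, R₁ < x → R₁ * (R₁ - R₀) * (a x / x) ≤ -4 := by
    intro x hx
    set q := a x / x with hq
    -- q < 0
    obtain ⟨R, hRS, hRx⟩ := exists_lt_of_csInf_lt ⟨_, hRbigS⟩ (hR₁ ▸ hx)
    have hq4 : R * (R - R₀) * q ≤ -4 := hRS.2 x hRx.le
    have hqneg : q < 0 := by
      by_contra hq0
      push_neg at hq0
      have : 0 ≤ R * (R - R₀) * q :=
        mul_nonneg (mul_nonneg (by linarith [hRS.1]) (by linarith [hRS.1])) hq0
      linarith
    -- K ≤ (R₁+ε)(R₁+ε-R₀) for all small ε > 0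
    have hKle : ∀ e : ℝ, 0 < e → e ≤ x - R₁ →
        -4 / q ≤ (R₁ + e) * (R₁ + e - R₀) := by
      intro e he hex
      obtain ⟨R', hR'S, hR'lt⟩ := exists_lt_of_csInf_lt ⟨_, hRbigS⟩
        (show sInf S₁ < R₁ + e by rw [← hR₁]; linarith)
      have hR'x : R' ≤ x := by linarith
      have hq4' : R' * (R' - R₀) * q ≤ -4 := hR'S.2 x hR'x
      have hpR : -4 / q ≤ R' * (R' - R₀) := (div_le_iff_of_neg hqneg).2 hq4'
      exact hpR.trans (hmono R' (R₁ + e) hR'S.1 hR'lt.le)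
    have hKR₁ : -4 / q ≤ R₁ * (R₁ - R₀) := by
      apply le_of_forall_pos_le_add
      intro e' he'
      have hC : (0:ℝ) < 2 * R₁ - R₀ + 1 := by linarith
      set e := min (e' / (2 * R₁ - R₀ + 1)) (min 1 (x - R₁)) with he
      have hepos : 0 < e := by
        apply lt_min (by positivity) (lt_min one_pos (by linarith))
      have he1 : e ≤ 1 := (min_le_right _ _).trans (min_le_left _ _)
      have hex : e ≤ x - R₁ := (min_le_right _ _).trans (min_le_right _ _)
      have heC : e * (2 * R₁ - R₀ + 1) ≤ e' := by
        have := (min_le_left _ _ : e ≤ e' / (2 * R₁ - R₀ + 1))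
        rw [le_div_iff₀ hC] at this
        linarith
      have := hKle e hepos hex
      nlinarith
    have hqne : q ≠ 0 := hqneg.ne
    have hKq : (-4 / q) * q = -4 := div_mul_cancel₀ _ hqne
    linarith [mul_le_mul_of_nonpos_right hKR₁ hqneg.le]
  -- R₀ < R₁, 0 < R₁
  have hp₁pos : 0 < R₁ * (R₁ - R₀) := by
    have h := hkey (R₁ + 1) (by linarith)
    by_contra hpn
    push_neg at hpn
    have hge : 0 ≤ R₁ * (R₁ - R₀) :=
      mul_nonneg (by linarith) (by linarith)
    have hz : R₁ * (R₁ - R₀) = 0 := le_antisymm hpn hge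
    rw [hz, zero_mul] at h
    linarith
  have hR₀R₁ : R₀ < R₁ := by nlinarith
  have hR₁pos : 0 < R₁ := by nlinarith
  have hrpos : 0 < r := hR₁pos.trans hr
  -- integrals
  have hh₁c : Continuous (fun s => Φ s / φ s) := hΦc.div hφc (fun s => (hφpos s).ne')
  have hh₂c : Continuous (fun s => 1 / φ s) := continuous_const.div hφc (fun s => (hφpos s).ne')
  set IΦ : ℝ := ∫ s in (0:ℝ)..R₁, Φ s / φ s with hIΦ
  set I₁ : ℝ := ∫ s in (0:ℝ)..R₁, 1 / φ s with hI₁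
  have hIΦpos : 0 < IΦ :=
    intervalIntegral.intervalIntegral_pos_of_pos_on (hh₁c.intervalIntegrable 0 R₁)
      (fun s hs => div_pos (hΦpos s hs.1) (hφpos s)) hR₁pos
  have hI₁pos : 0 < I₁ :=
    intervalIntegral.intervalIntegral_pos_of_pos_on (hh₂c.intervalIntegrable 0 R₁)
      (fun s _ => div_pos one_pos (hφpos s)) hR₁pos
  have hcpos : 0 < c := by
    rw [hc]
    exact inv_pos.2 (by linarith)
  -- g properties
  have hg_half : g r = 1/2 := by
    rw [hg r, min_eq_right hr.le, ← hIΦ, ← hI₁, mul_div_assoc, mul_div_assoc,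
      div_self hIΦpos.ne', div_self hI₁pos.ne']
    norm_num
  have hg_le_one : ∀ x, 0 ≤ x → g x ≤ 1 := by
    intro x hx
    rw [hg x]
    have m0 : 0 ≤ min x R₁ := le_min hx hR₁pos.le
    have hA : 0 ≤ ∫ s in (0:ℝ)..(min x R₁), Φ s / φ s :=
      intervalIntegral.integral_nonneg m0
        (fun u hu => div_nonneg (hΦnonneg u hu.1) (hφpos u).le)
    have hB : 0 ≤ ∫ s in (0:ℝ)..(min x R₁), 1 / φ s :=
      intervalIntegral.integral_nonneg m0
        (fun u _ => div_nonneg one_pos.le (hφpos u).le)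
    have h1 : 0 ≤ (1/4) * (∫ s in (0:ℝ)..(min x R₁), Φ s / φ s) / IΦ := by positivity
    have h2 : 0 ≤ (1/4) * (∫ s in (0:ℝ)..(min x R₁), 1 / φ s) / I₁ := by positivity
    linarith
  have hH₁ : Continuous (fun t => ∫ s in (0:ℝ)..t, Φ s / φ s) := primitive_continuous hh₁c
  have hH₂ : Continuous (fun t => ∫ s in (0:ℝ)..t, 1 / φ s) := primitive_continuous hh₂c
  have hgc : Continuous g := by
    rw [funext hg]
    exact (continuous_const.sub
      ((continuous_const.mul (hH₁.comp (continuous_id.min continuous_const))).div_const _)).sub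
      ((continuous_const.mul (hH₂.comp (continuous_id.min continuous_const))).div_const _)
  -- derivative of f
  have hfd : deriv f r = φ R₀ * (1/2) := by
    have hfe : f = fun t => ∫ s in (0:ℝ)..t, φ s * g s := funext hf
    rw [hfe, (primitive_hasDerivAt (h := fun s => φ s * g s) (hφc.mul hgc) r).deriv, hg_half,
      hφconst r (by linarith)]
  -- f r ≤ Φ r
  have hfΦ : f r ≤ Φ r := by
    rw [hf, hΦ]
    apply intervalIntegral.integral_mono_on hrpos.le ((hφc.mul hgc).intervalIntegrable 0 r)
      (hφc.intervalIntegrable 0 r)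
    intro u hu
    show φ u * g u ≤ φ u
    nlinarith [hφpos u, hg_le_one u hu.1]
  -- Φ is linear beyond R₀
  have hΦlin : ∀ x, R₀ ≤ x → Φ x = Φ R₀ + (x - R₀) * φ R₀ := by
    intro x hx
    have hsplit : (∫ s in (0:ℝ)..R₀, φ s) + ∫ s in R₀..x, φ s
        = ∫ s in (0:ℝ)..x, φ s :=
      intervalIntegral.integral_add_adjacent_intervals
        (hφc.intervalIntegrable 0 R₀) (hφc.intervalIntegrable R₀ x)
    have hconst : ∫ s in R₀..x, φ s = (x - R₀) * φ R₀ := by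
      rw [intervalIntegral.integral_congr (g := fun _ => φ R₀)
        (fun s hs => hφconst s (by rw [Set.uIcc_of_le hx] at hs; exact hs.1))]
      rw [intervalIntegral.integral_const, smul_eq_mul]
    rw [hΦ x, ← hsplit, hconst, ← hΦ R₀]
  have hΦR₀ : R₀ * φ R₀ ≤ Φ R₀ := by
    rw [hΦ R₀]
    calc R₀ * φ R₀ = ∫ _ in (0:ℝ)..R₀, φ R₀ := by
          rw [intervalIntegral.integral_const, smul_eq_mul]; ring
      _ ≤ ∫ s in (0:ℝ)..R₀, φ s := by
          apply intervalIntegral.integral_mono_on hR₀0 intervalIntegrable_const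
            (hφc.intervalIntegrable 0 R₀)
          exact fun u hu => hφanti u R₀ hu.2
  -- key integral lower bound : (R₁ - R₀) * Φ R₁ ≤ 2 * IΦ * φ R₀
  have hIΦlow : (R₁ - R₀) * Φ R₁ ≤ 2 * IΦ * φ R₀ := by
    have hsplit : (∫ s in (0:ℝ)..R₀, Φ s / φ s) + ∫ s in R₀..R₁, Φ s / φ s
        = ∫ s in (0:ℝ)..R₁, Φ s / φ s :=
      intervalIntegral.integral_add_adjacent_intervals
        (hh₁c.intervalIntegrable 0 R₀) (hh₁c.intervalIntegrable R₀ R₁)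
    have h0 : 0 ≤ ∫ s in (0:ℝ)..R₀, Φ s / φ s :=
      intervalIntegral.integral_nonneg hR₀0
        (fun u hu => div_nonneg (hΦnonneg u hu.1) (hφpos u).le)
    have hJeq : ∫ s in R₀..R₁, Φ s / φ s
        = ∫ s in R₀..R₁, (Φ R₀ / φ R₀ + (s - R₀)) := by
      apply intervalIntegral.integral_congr
      intro s hs
      rw [Set.uIcc_of_le hR₀R₁le] at hs
      show Φ s / φ s = Φ R₀ / φ R₀ + (s - R₀)
      rw [hΦlin s hs.1, hφconst s hs.1, add_div,
        mul_div_cancel_right₀ _ (hφpos R₀).ne']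
    have hlinint : ∫ s in R₀..R₁, (s - R₀) = (R₁ - R₀)^2/2 := by
      rw [intervalIntegral.integral_comp_sub_right (fun x : ℝ => x) R₀, integral_id, sub_self]
      ring
    have hintg : IntervalIntegrable (fun s : ℝ => s - R₀) volume R₀ R₁ :=
      (continuous_id.sub continuous_const).intervalIntegrable R₀ R₁
    have hJval : ∫ s in R₀..R₁, (Φ R₀ / φ R₀ + (s - R₀))
        = (R₁ - R₀) * (Φ R₀ / φ R₀) + (R₁ - R₀)^2/2 := by
      rw [intervalIntegral.integral_add intervalIntegrable_const hintg,
        intervalIntegral.integral_const, smul_eq_mul, hlinint]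
    have hJ : ∫ s in R₀..R₁, Φ s / φ s
        = (R₁ - R₀) * (Φ R₀ / φ R₀) + (R₁ - R₀)^2/2 :=
      hJeq.trans hJval
    have hdiv : Φ R₀ / φ R₀ * φ R₀ = Φ R₀ := div_mul_cancel₀ _ (hφpos R₀).ne'
    have hJ2 : (∫ s in R₀..R₁, Φ s / φ s) * φ R₀
        = (R₁ - R₀) * Φ R₀ + (R₁ - R₀)^2/2 * φ R₀ := by
      rw [hJ]
      linear_combination (R₁ - R₀) * hdiv
    have hΦR₁' : Φ R₁ = Φ R₀ + (R₁ - R₀) * φ R₀ := hΦlin R₁ hR₀R₁le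
    have hΦR₀nn : 0 ≤ Φ R₀ := hΦnonneg R₀ hR₀0
    have hIΦsplit : IΦ = (∫ s in (0:ℝ)..R₀, Φ s / φ s) + ∫ s in R₀..R₁, Φ s / φ s := by
      rw [hIΦ, ← hsplit]
    have h2J : 2 * IΦ * φ R₀ = 2 * ((∫ s in (0:ℝ)..R₀, Φ s / φ s) * φ R₀)
        + 2 * ((∫ s in R₀..R₁, Φ s / φ s) * φ R₀) := by
      rw [hIΦsplit]; ring
    nlinarith [hJ2, h2J, mul_nonneg h0 (hφpos R₀).le,
      mul_nonneg (by linarith : (0:ℝ) ≤ R₁ - R₀) hΦR₀nn]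
  -- final assembly
  have hΦR₁pos : 0 < Φ R₁ := hΦpos R₁ hR₁pos
  have harle : R₁ * (R₁ - R₀) * a r ≤ -4 * r := by
    have h := hkey r hr
    have := mul_le_mul_of_nonneg_right h hrpos.le
    have hid : R₁ * (R₁ - R₀) * (a r / r) * r = R₁ * (R₁ - R₀) * a r := by
      field_simp
    rw [hid] at this
    linarith
  have step1 : a r ≤ -4 * r / (R₁ * (R₁ - R₀)) := by
    rw [le_div_iff₀ hp₁pos]
    linarith
  have step2 : φ R₀ * (1/2) * a r ≤ -(2 * φ R₀ * r / (R₁ * (R₁ - R₀))) := by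
    have := mul_le_mul_of_nonneg_left step1 (by linarith [hφpos R₀] : (0:ℝ) ≤ φ R₀ * (1/2))
    have heq : φ R₀ * (1/2) * (-4 * r / (R₁ * (R₁ - R₀)))
        = -(2 * φ R₀ * r / (R₁ * (R₁ - R₀))) := by ring
    linarith
  have hεle : ε ≤ c * Φ R₁ := by rw [hε]; exact min_le_right _ _
  have hrR₁ : 1 ≤ r / R₁ := (one_le_div hR₁pos).2 hr.le
  have hΦrle : Φ r ≤ Φ R₁ * (r / R₁) := by
    have hΦr' : Φ r = Φ R₀ + (r - R₀) * φ R₀ := hΦlin r (by linarith)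
    have hΦR₁' : Φ R₁ = Φ R₀ + (R₁ - R₀) * φ R₀ := hΦlin R₁ hR₀R₁le
    have hkey2 : Φ r * R₁ ≤ Φ R₁ * r := by
      nlinarith [mul_nonneg (by linarith : (0:ℝ) ≤ r - R₁)
        (by linarith [hΦR₀] : (0:ℝ) ≤ Φ R₀ - R₀ * φ R₀)]
    have h' : Φ r ≤ Φ R₁ * r / R₁ := (le_div_iff₀ hR₁pos).2 hkey2
    rwa [mul_div_assoc] at h'
  have hcΦnn : 0 ≤ c * Φ R₁ := mul_nonneg hcpos.le hΦR₁pos.le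
  have step3 : ε + c * f r ≤ 2 * (c * Φ R₁) * (r / R₁) := by
    have h1 : ε ≤ c * Φ R₁ * (r / R₁) :=
      hεle.trans (le_mul_of_one_le_right hcΦnn hrR₁)
    have h2 : c * f r ≤ c * (Φ R₁ * (r / R₁)) :=
      mul_le_mul_of_nonneg_left (hfΦ.trans hΦrle) hcpos.le
    nlinarith
  have hcΦ : c * Φ R₁ * (R₁ - R₀) ≤ φ R₀ := by
    rw [hc, inv_mul_eq_div, div_mul_eq_mul_div,
      div_le_iff₀ (by linarith : (0:ℝ) < 2 * IΦ)]
    nlinarith [hIΦlow]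
  have hsub : c * Φ R₁ ≤ φ R₀ / (R₁ - R₀) :=
    (le_div_iff₀ (by linarith : (0:ℝ) < R₁ - R₀)).2 hcΦ
  have hrR₁nn : (0:ℝ) ≤ r / R₁ := by positivity
  have step4 : 2 * (c * Φ R₁) * (r / R₁) ≤ 2 * (φ R₀ / (R₁ - R₀)) * (r / R₁) := by
    nlinarith
  have hRHSeq : 2 * (φ R₀ / (R₁ - R₀)) * (r / R₁) = 2 * φ R₀ * r / (R₁ * (R₁ - R₀)) := by
    have hne1 : R₁ ≠ 0 := hR₁pos.ne'
    have hne2 : R₁ - R₀ ≠ 0 := sub_ne_zero.2 hR₀R₁.ne'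
    field_simp
    try ring
    try exact Or.inl trivial
  rw [hfd]
  linarith [step2, step3, step4]
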